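/- Let m ≤ n be positive integers and ν a real number with ν > m−1. Let M be an invertible m×m real matrix, N an invertible n×n real matrix, μ₀ a fixed m×n real matrix, and set 𝕭 = M·Mᵀ and 𝕯 = (N·Nᵀ)⁻¹. Then the pushforward of the standard matricvariate Pearson type II measure P(m,n,ν) under the map R ↦ (Mᵀ)⁻¹·R·N⁻¹ + μ₀ equals the measure on m×n real matrices with density Q ↦ [Γ_m((n+ν)/2)/(π^{mn/2}·Γ_m(ν/2))]·det(𝕭)^{(ν+n−m+1)/2−1}·det(𝕯)^{−m/2}·det(𝕭⁻¹ − (Q−μ₀)·𝕯⁻¹·(Q−μ₀)ᵀ)^{(ν−m+1)/2−1} on the set {Q : 𝕭⁻¹ − (Q−μ₀)·𝕯⁻¹·(Q−μ₀)ᵀ is positive definite} (and zero elsewhere), with respect to Lebesgue measure. -/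

import Mathlib

open MeasureTheory Matrix
open scoped Kronecker ENNReal

/-- View a family indexed by pairs as a matrix. -/
def toMat {m n : ℕ} (X : Fin m × Fin n → ℝ) : Matrix (Fin m) (Fin n) ℝ :=
  Matrix.of fun i j => X (i, j)

/-- The real multivariate gamma function. -/
noncomputable def mvGamma (m : ℕ) (a : ℝ) : ℝ :=
  Real.pi ^ ((m : ℝ) * ((m : ℝ) - 1) / 4) *
    ∏ i ∈ Finset.range m, Real.Gamma (a - (i : ℝ) / 2)

/-- The standard matricvariate Pearson type II measure on `m × n` real matrices. -/
noncomputable def pearsonII (m n : ℕ) (ν : ℝ) : Measure (Fin m × Fin n → ℝ) :=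
  volume.withDensity fun R =>
    {R : Fin m × Fin n → ℝ | ((1 : Matrix (Fin m) (Fin m) ℝ) - toMat R * (toMat R)ᵀ).PosDef}.indicator
      (fun R => ENNReal.ofReal
        (mvGamma m (((n : ℝ) + ν) / 2) / (Real.pi ^ ((m : ℝ) * n / 2) * mvGamma m (ν / 2)) *
          ((1 : Matrix (Fin m) (Fin m) ℝ) - toMat R * (toMat R)ᵀ).det ^ ((ν - m + 1) / 2 - 1 : ℝ))) R

lemma map_withDensity_equiv {α β : Type*} [MeasurableSpace α] [MeasurableSpace β]
    (e : α ≃ᵐ β) (μ : Measure α) (f : α → ℝ≥0∞) :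
    (μ.withDensity f).map e = (μ.map e).withDensity (fun y => f (e.symm y)) := by
  ext s hs
  rw [MeasurableEquiv.map_apply, withDensity_apply _ hs,
    withDensity_apply _ (e.measurable hs), Measure.restrict_map e.measurable hs,
    lintegral_map_equiv]
  simp

lemma withDensity_smul_measure' {α : Type*} [MeasurableSpace α] (c : ℝ≥0∞) (hc : c ≠ ⊤)
    (μ : Measure α) (f : α → ℝ≥0∞) :
    (c • μ).withDensity f = μ.withDensity (fun x => c * f x) := by
  ext s hs
  rw [withDensity_apply _ hs, withDensity_apply _ hs, Measure.restrict_smul,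
    lintegral_smul_measure, lintegral_const_mul' _ _ hc, smul_eq_mul]

lemma posdef_conj {k : ℕ} {A C : Matrix (Fin k) (Fin k) ℝ} (hC : IsUnit C.det)
    (hA : A.PosDef) : (Cᵀ * A * C).PosDef := by
  rw [posDef_iff_dotProduct_mulVec]
  constructor
  · have hAs : Aᵀ = A := hA.isHermitian
    show (Cᵀ * A * C)ᴴ = _
    simp only [conjTranspose_eq_transpose_of_trivial, transpose_mul, transpose_transpose, hAs,
      Matrix.mul_assoc]
  · intro x hx
    have hCx : C *ᵥ x ≠ 0 := by
      intro h
      apply hx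
      have := congrArg (fun y => C⁻¹ *ᵥ y) h
      simpa [Matrix.mulVec_mulVec, Matrix.nonsing_inv_mul C hC] using this
    have := hA.dotProduct_mulVec_pos hCx
    simpa [Matrix.mulVec_mulVec, Matrix.dotProduct_mulVec, Matrix.vecMul_transpose,
      ← Matrix.vecMul_vecMul, Matrix.mul_assoc] using this

lemma posdef_conj_iff {k : ℕ} {A C : Matrix (Fin k) (Fin k) ℝ} (hC : IsUnit C.det) :
    (Cᵀ * A * C).PosDef ↔ A.PosDef := by
  constructor
  · intro h
    have hC' : IsUnit (C⁻¹).det := by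
      simpa [Matrix.det_nonsing_inv] using hC.inv
    have := posdef_conj (A := Cᵀ * A * C) (C := C⁻¹) hC' h
    have hid : (C⁻¹)ᵀ * (Cᵀ * A * C) * C⁻¹ = A := by
      have hCt : IsUnit (Cᵀ).det := by rwa [Matrix.det_transpose]
      rw [Matrix.transpose_nonsing_inv]
      calc (Cᵀ)⁻¹ * (Cᵀ * A * C) * C⁻¹ = ((Cᵀ)⁻¹ * Cᵀ) * A * (C * C⁻¹) := by
            simp only [Matrix.mul_assoc]
        _ = A := by rw [Matrix.nonsing_inv_mul _ hCt, Matrix.mul_nonsing_inv C hC,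
              Matrix.one_mul, Matrix.mul_one]
    rwa [hid] at this
  · exact posdef_conj hC

lemma real_density_eq (m n : ℕ) (ν c0 x y d : ℝ) (hx : x ≠ 0) (hy : y ≠ 0) (hd : 0 < d) :
    |x| ^ n * |y| ^ m * (c0 * (x * d * x) ^ ((ν - m + 1) / 2 - 1 : ℝ)) =
      c0 * (x ^ 2) ^ ((ν + n - m + 1) / 2 - 1 : ℝ) * ((y ^ 2)⁻¹) ^ (-(m : ℝ) / 2) *
        d ^ ((ν - m + 1) / 2 - 1 : ℝ) := by
  have ha : (0 : ℝ) < |x| := abs_pos.mpr hx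
  have hb : (0 : ℝ) < |y| := abs_pos.mpr hy
  have hx2 : x ^ 2 = |x| ^ 2 := (sq_abs x).symm
  have hy2 : y ^ 2 = |y| ^ 2 := (sq_abs y).symm
  have hxdx : x * d * x = |x| ^ 2 * d := by rw [sq_abs]; ring
  rw [hxdx, hx2, hy2]
  set a := |x|
  set b := |y|
  have h2 : (a : ℝ) ^ 2 = a ^ (2 : ℝ) := by
    rw [show ((2:ℝ)) = ((2:ℕ) : ℝ) by norm_num, Real.rpow_natCast]
  have h2b : (b : ℝ) ^ 2 = b ^ (2 : ℝ) := by
    rw [show ((2:ℝ)) = ((2:ℕ) : ℝ) by norm_num, Real.rpow_natCast]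
  have han : a ^ n = a ^ ((n : ℕ) : ℝ) := (Real.rpow_natCast a n).symm
  have hbm : b ^ m = b ^ ((m : ℕ) : ℝ) := (Real.rpow_natCast b m).symm
  rw [Real.mul_rpow (by positivity) hd.le, h2, h2b, han, hbm,
    ← Real.rpow_mul ha.le, ← Real.rpow_mul ha.le,
    Real.inv_rpow (by positivity), ← Real.rpow_neg (by positivity),
    ← Real.rpow_mul hb.le]
  rw [show ((2:ℝ) * -(-(m:ℝ)/2)) = ((m:ℕ):ℝ) by ring]
  have hcomb : a ^ (((n:ℕ)):ℝ) * a ^ ((2:ℝ) * ((ν - m + 1)/2 - 1)) =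
      a ^ ((2:ℝ) * ((ν + n - m + 1)/2 - 1)) := by
    rw [← Real.rpow_add ha]; congr 1; ring
  calc a ^ ((n:ℕ):ℝ) * b ^ ((m:ℕ):ℝ) *
        (c0 * (a ^ ((2:ℝ) * ((ν - m + 1)/2 - 1)) * d ^ ((ν - m + 1)/2 - 1)))
      = (a ^ ((n:ℕ):ℝ) * a ^ ((2:ℝ) * ((ν - m + 1)/2 - 1))) * b ^ ((m:ℕ):ℝ) *
        (c0 * d ^ ((ν - m + 1)/2 - 1)) := by ring
    _ = _ := by rw [hcomb]; ring

theorem pearsonII_affine_transform (m n : ℕ) (ν : ℝ) (hm : 1 ≤ m) (hmn : m ≤ n)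
    (hν : (m : ℝ) - 1 < ν)
    (M : Matrix (Fin m) (Fin m) ℝ) (hM : IsUnit M.det)
    (N : Matrix (Fin n) (Fin n) ℝ) (hN : IsUnit N.det)
    (μ₀ : Matrix (Fin m) (Fin n) ℝ) :
    Measure.map (fun R : Fin m × Fin n → ℝ => fun p : Fin m × Fin n =>
        (Mᵀ⁻¹ * toMat R * N⁻¹ + μ₀) p.1 p.2) (pearsonII m n ν) =
      volume.withDensity fun Q =>
        {Q : Fin m × Fin n → ℝ |
            ((M * Mᵀ)⁻¹ -
              (toMat Q - μ₀) * ((N * Nᵀ)⁻¹)⁻¹ * (toMat Q - μ₀)ᵀ).PosDef}.indicator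
          (fun Q => ENNReal.ofReal
            (mvGamma m (((n : ℝ) + ν) / 2) / (Real.pi ^ ((m : ℝ) * n / 2) * mvGamma m (ν / 2)) *
              (M * Mᵀ).det ^ ((ν + n - m + 1) / 2 - 1 : ℝ) *
              ((N * Nᵀ)⁻¹).det ^ (-(m : ℝ) / 2) *
              ((M * Mᵀ)⁻¹ -
                (toMat Q - μ₀) * ((N * Nᵀ)⁻¹)⁻¹ * (toMat Q - μ₀)ᵀ).det ^ ((ν - m + 1) / 2 - 1 : ℝ))) Q := by
  classical
  set c0 : ℝ :=
    mvGamma m (((n : ℝ) + ν) / 2) / (Real.pi ^ ((m : ℝ) * n / 2) * mvGamma m (ν / 2)) with hc0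
  -- the linear part
  set K : Matrix (Fin m × Fin n) (Fin m × Fin n) ℝ := Mᵀ⁻¹ ⊗ₖ (N⁻¹)ᵀ with hK
  have hKdet : K.det = (M.det)⁻¹ ^ n * (N.det)⁻¹ ^ m := by
    rw [hK, Matrix.det_kronecker, Fintype.card_fin, Fintype.card_fin, Matrix.det_transpose,
      Matrix.det_nonsing_inv, Matrix.det_nonsing_inv, Matrix.det_transpose,
      Ring.inverse_eq_inv, Ring.inverse_eq_inv]
  have hKunit : IsUnit K.det := by
    rw [hKdet]; exact (hM.inv.pow n).mul (hN.inv.pow m)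
  have hKinv : Invertible K := K.invertibleOfIsUnitDet hKunit
  let L : (Fin m × Fin n → ℝ) ≃ₗ[ℝ] (Fin m × Fin n → ℝ) := K.toLinearEquiv' hKinv
  have hL : ∀ R : Fin m × Fin n → ℝ,
      L R = fun p : Fin m × Fin n => (Mᵀ⁻¹ * toMat R * N⁻¹) p.1 p.2 := by
    intro R; funext p
    show Matrix.toLin' K R p = _
    rw [Matrix.toLin'_apply]
    simp only [Matrix.mulVec, dotProduct, hK, Matrix.kroneckerMap_apply,
      Fintype.sum_prod_type, Matrix.mul_apply, toMat, Matrix.of_apply, Finset.sum_mul,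
      Finset.mul_sum, Matrix.transpose_apply]
    rw [Finset.sum_comm]
    congr 1; funext l; congr 1; funext k; ring
  have hLdet : LinearMap.det (L : (Fin m × Fin n → ℝ) →ₗ[ℝ] (Fin m × Fin n → ℝ)) = K.det := by
    rw [Matrix.toLinearEquiv'_apply, LinearMap.det_toLin']
  set c : Fin m × Fin n → ℝ := fun p => μ₀ p.1 p.2 with hcc
  let e₁ : (Fin m × Fin n → ℝ) ≃ᵐ (Fin m × Fin n → ℝ) :=
    L.toContinuousLinearEquiv.toHomeomorph.toMeasurableEquiv
  let e₂ : (Fin m × Fin n → ℝ) ≃ᵐ (Fin m × Fin n → ℝ) := MeasurableEquiv.addRight c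
  let e := e₁.trans e₂
  have he : (fun R : Fin m × Fin n → ℝ => fun p : Fin m × Fin n =>
      (Mᵀ⁻¹ * toMat R * N⁻¹ + μ₀) p.1 p.2) = ⇑e := by
    funext R
    show _ = e₂ (e₁ R)
    have h1 : e₁ R = L R := rfl
    have h2 : ∀ x, e₂ x = x + c := fun _ => rfl
    rw [h2, h1, hL]
    funext p
    simp [hcc, Matrix.add_apply]
  have he₁vol : Measure.map (⇑e₁) volume = ENNReal.ofReal |(K.det)⁻¹| • volume := by
    have h1 : (⇑e₁ : (Fin m × Fin n → ℝ) → (Fin m × Fin n → ℝ)) =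
        ⇑(L : (Fin m × Fin n → ℝ) →ₗ[ℝ] (Fin m × Fin n → ℝ)) := rfl
    rw [h1, Measure.map_linearMap_addHaar_eq_smul_addHaar volume (by rw [hLdet]; exact hKunit.ne_zero),
      hLdet]
  have hevol : Measure.map (⇑e) volume =
      ENNReal.ofReal (|M.det| ^ n * |N.det| ^ m) • volume := by
    have hcomp : Measure.map (⇑e) volume = Measure.map (⇑e₂) (Measure.map (⇑e₁) volume) := by
      rw [Measure.map_map e₂.measurable e₁.measurable]; rfl
    have h2 : Measure.map (⇑e₂) volume = volume := by
      have h3 : (⇑e₂ : (Fin m × Fin n → ℝ) → (Fin m × Fin n → ℝ)) = fun x => x + c := rfl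
      rw [h3]; exact map_add_right_eq_self volume c
    rw [hcomp, he₁vol, Measure.map_smul, h2]
    congr 1
    rw [hKdet, mul_inv, inv_pow, inv_pow, inv_inv, inv_inv, abs_mul, abs_pow, abs_pow]
  rw [pearsonII, he, map_withDensity_equiv e volume _, hevol,
    withDensity_smul_measure' _ ENNReal.ofReal_ne_top]
  congr 1
  funext Q
  set R := e.symm Q with hRdef
  have hQ : e R = Q := e.apply_symm_apply Q
  have h2 : toMat (e R) = Mᵀ⁻¹ * toMat R * N⁻¹ + μ₀ := by
    rw [← congrFun he R]
    rfl
  have hQ' : Mᵀ⁻¹ * toMat R * N⁻¹ + μ₀ = toMat Q := by rw [← h2, hQ]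
  have hmt : IsUnit Mᵀ.det := by rwa [Matrix.det_transpose]
  have hX : toMat R = Mᵀ * (toMat Q - μ₀) * N := by
    have h3 : toMat Q - μ₀ = Mᵀ⁻¹ * toMat R * N⁻¹ := by rw [← hQ', add_sub_cancel_right]
    rw [h3]
    symm
    calc Mᵀ * (Mᵀ⁻¹ * toMat R * N⁻¹) * N = (Mᵀ * Mᵀ⁻¹) * toMat R * (N⁻¹ * N) := by
          simp only [Matrix.mul_assoc]
      _ = toMat R := by
          rw [Matrix.mul_nonsing_inv _ hmt, Matrix.nonsing_inv_mul _ hN, Matrix.one_mul,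
            Matrix.mul_one]
  have hNNdet : IsUnit (N * Nᵀ).det := by
    rw [Matrix.det_mul, Matrix.det_transpose]; exact hN.mul hN
  have hNNinv : ((N * Nᵀ)⁻¹)⁻¹ = N * Nᵀ := Matrix.nonsing_inv_nonsing_inv _ hNNdet
  set Y := toMat Q - μ₀ with hY
  set Δ := (M * Mᵀ)⁻¹ - Y * ((N * Nᵀ)⁻¹)⁻¹ * Yᵀ with hΔdef
  have h1 : Mᵀ * (M * Mᵀ)⁻¹ * M = 1 := by
    rw [Matrix.mul_inv_rev]
    calc Mᵀ * (Mᵀ⁻¹ * M⁻¹) * M = (Mᵀ * Mᵀ⁻¹) * (M⁻¹ * M) := by simp only [Matrix.mul_assoc]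
      _ = 1 := by
          rw [Matrix.mul_nonsing_inv _ hmt, Matrix.nonsing_inv_mul _ hM, Matrix.one_mul]
  have key : (1 : Matrix (Fin m) (Fin m) ℝ) - toMat R * (toMat R)ᵀ = Mᵀ * Δ * M := by
    rw [hΔdef, hNNinv, Matrix.mul_sub, Matrix.sub_mul, h1, hX]
    congr 1
    rw [Matrix.transpose_mul, Matrix.transpose_mul, Matrix.transpose_transpose]
    simp only [Matrix.mul_assoc]
  have hmem : ((1 : Matrix (Fin m) (Fin m) ℝ) - toMat R * (toMat R)ᵀ).PosDef ↔ Δ.PosDef := by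
    rw [key]; exact posdef_conj_iff hM
  by_cases hΔ : Δ.PosDef
  · have hmemR : R ∈ {R : Fin m × Fin n → ℝ |
        ((1 : Matrix (Fin m) (Fin m) ℝ) - toMat R * (toMat R)ᵀ).PosDef} := hmem.mpr hΔ
    have hmemQ : Q ∈ {Q : Fin m × Fin n → ℝ |
        ((M * Mᵀ)⁻¹ - (toMat Q - μ₀) * ((N * Nᵀ)⁻¹)⁻¹ * (toMat Q - μ₀)ᵀ).PosDef} := hΔ
    rw [Set.indicator_of_mem hmemR, Set.indicator_of_mem hmemQ]
    rw [← ENNReal.ofReal_mul (by positivity)]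
    congr 1
    have hdetkey : ((1 : Matrix (Fin m) (Fin m) ℝ) - toMat R * (toMat R)ᵀ).det =
        M.det * Δ.det * M.det := by
      rw [key, Matrix.det_mul, Matrix.det_mul, Matrix.det_transpose]
    have hMM : (M * Mᵀ).det = M.det ^ 2 := by
      rw [Matrix.det_mul, Matrix.det_transpose, sq]
    have hNNinvdet : ((N * Nᵀ)⁻¹).det = (N.det ^ 2)⁻¹ := by
      rw [Matrix.det_nonsing_inv, Ring.inverse_eq_inv, Matrix.det_mul, Matrix.det_transpose, sq]
    rw [hdetkey, hMM, hNNinvdet]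
    exact real_density_eq m n ν c0 M.det N.det Δ.det hM.ne_zero hN.ne_zero hΔ.det_pos
  · have hnR : R ∉ {R : Fin m × Fin n → ℝ |
        ((1 : Matrix (Fin m) (Fin m) ℝ) - toMat R * (toMat R)ᵀ).PosDef} :=
      fun h => hΔ (hmem.mp h)
    have hnQ : Q ∉ {Q : Fin m × Fin n → ℝ |
        ((M * Mᵀ)⁻¹ - (toMat Q - μ₀) * ((N * Nᵀ)⁻¹)⁻¹ * (toMat Q - μ₀)ᵀ).PosDef} := hΔ
    rw [Set.indicator_of_notMem hnR, Set.indicator_of_notMem hnQ, mul_zero]
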